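/- Let Z(Y,X) be a zoom space, let Y be a dense subspace of Ỹ, and let each X_i be a subspace of X̃_i, so that Z(Y,X) is a subspace of Z(Ỹ,X̃). Then Compl(Z(Y,X), Z(Ỹ,X̃)) = max{ Compl(Y,Ỹ), sup_{i∈I_Y} Compl(X_i, X̃_i) }, whenever at least one side of this equality is defined (i.e., the relevant set is Suslin-F in the corresponding ambient space). -/

import Mathlib

noncomputable section
open Classical Set Topology Filter Ordinal

universe u v

namespace FBorelPaper

/-! ### Ordinal parity -/

/-- The first uncountable ordinal. -/
def omega1 : Ordinal.{0} := Ordinal.omega 1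

/-- An ordinal `a = λ + m` (with `λ` limit or zero, `m < ω`) is *even* iff `m` is even. -/
def EvenOrd (a : Ordinal.{0}) : Prop := a % 2 = 0

/-- An ordinal `a = λ + m` (with `λ` limit or zero, `m < ω`) is *odd* iff `m` is odd. -/
def OddOrd (a : Ordinal.{0}) : Prop := a % 2 = 1

/-- For `a = λ + 2n + i` (with `λ` limit or zero, `n < ω`, `i ∈ {0,1}`),
`ordPrime a = λ + n` (the ordinal `α'` of the paper). -/
def ordPrime (a : Ordinal.{0}) : Ordinal.{0} :=
  Ordinal.omega0 * (a / Ordinal.omega0) + (a % Ordinal.omega0) / 2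

/-! ### The F-Borel hierarchy -/

/-- The `F`-Borel hierarchy of a topological space: `FBorel Y 0` is the family of closed
sets, and for `0 < a`, `FBorel Y a` consists of all countable unions (for odd `a`),
resp. countable intersections (for even `a`), of members of `⋃ b < a, FBorel Y b`. -/
def FBorel (Y : Type u) [TopologicalSpace Y] : Ordinal.{0} → Set (Set Y) :=
  WellFounded.fix Ordinal.lt_wf (C := fun _ => Set (Set Y)) fun a ih =>
    if a = 0 then { F | IsClosed F }
    else if EvenOrd a then
      { S | ∃ f : ℕ → Set Y, (∀ n, ∃ b, ∃ h : b < a, f n ∈ ih b h) ∧ S = ⋂ n, f n }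
    else
      { S | ∃ f : ℕ → Set Y, (∀ n, ∃ b, ∃ h : b < a, f n ∈ ih b h) ∧ S = ⋃ n, f n }

/-- The list `(σ 0, …, σ (k-1))` of the first `k` values of `σ : ℕ → ℕ`. -/
def seqPrefix (σ : ℕ → ℕ) (k : ℕ) : List ℕ := List.ofFn fun i : Fin k => σ i

/-- A Suslin scheme: a monotone family of sets indexed by finite sequences. -/
def IsSuslinScheme {Y : Type u} (C : List ℕ → Set Y) : Prop :=
  ∀ ⦃s t : List ℕ⦄, s <+: t → C t ⊆ C s

/-- The Suslin operation `A(C) = ⋃_{σ ∈ ω^ω} ⋂_k C(σ|k)`. -/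
def suslinOp {Y : Type u} (C : List ℕ → Set Y) : Set Y :=
  ⋃ σ : ℕ → ℕ, ⋂ k : ℕ, C (seqPrefix σ k)

/-- The Suslin-F subsets of `Y`: results of the Suslin operation applied to schemes of
closed sets. -/
def SuslinF (Y : Type u) [TopologicalSpace Y] : Set (Set Y) :=
  { S | ∃ C : List ℕ → Set Y, (∀ s, IsClosed (C s)) ∧ S = suslinOp C }

/-- The classes `F_a(Y)` for `a ≤ ω₁`, where `F_{ω₁}(Y)` is the class of Suslin-F sets. -/
def FClass (Y : Type u) [TopologicalSpace Y] (a : Ordinal.{0}) : Set (Set Y) :=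
  if a < omega1 then FBorel Y a else SuslinF Y

/-- `ComplIn Y X` is the complexity of `X` in `Y`: the least `a ≤ ω₁` with `X ∈ F_a(Y)`. -/
def ComplIn (Y : Type u) [TopologicalSpace Y] (X : Set Y) : Ordinal.{0} :=
  sInf { a : Ordinal.{0} | a ≤ omega1 ∧ X ∈ FClass Y a }

/-! ### Compactifications, K-analytic spaces, local complexity -/

/-- `(K, e)` is a compactification of `X`: `K` is compact Hausdorff and `e` is a dense
embedding of `X` into `K`. -/
def IsCompactification (X : Type u) [TopologicalSpace X] (K : Type u) [TopologicalSpace K]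
    (e : X → K) : Prop :=
  CompactSpace K ∧ T2Space K ∧ IsEmbedding e ∧ DenseRange e

/-- The set `Compl(X)` of all complexities attained by `X` in its compactifications. -/
def AttainedCompl (X : Type u) [TopologicalSpace X] : Set Ordinal.{0} :=
  { γ | ∃ (K : Type u) (_ : TopologicalSpace K) (e : X → K),
      IsCompactification X K e ∧ Set.range e ∈ SuslinF K ∧ γ = ComplIn K (Set.range e) }

/-- A topological space is K-analytic iff it embeds as a Suslin-F subset of some compact
Hausdorff space. -/
def IsKAnalytic (X : Type u) [TopologicalSpace X] : Prop :=
  ∃ (K : Type u) (_ : TopologicalSpace K) (e : X → K),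
    CompactSpace K ∧ T2Space K ∧ IsEmbedding e ∧ Set.range e ∈ SuslinF K

/-- The local complexity `Compl_y(X, Y)`: the least complexity of `cl(U) ∩ X` in `Y` over
all open neighborhoods `U` of `y` in `Y`. -/
def locComplAt (Y : Type u) [TopologicalSpace Y] (X : Set Y) (y : Y) : Ordinal.{0} :=
  sInf { γ : Ordinal.{0} | ∃ U : Set Y, IsOpen U ∧ y ∈ U ∧ γ = ComplIn Y (closure U ∩ X) }

/-- The local complexity `Compl_loc(X, Y) = sup_{x ∈ X} Compl_x(X, Y)`. -/
def locCompl (Y : Type u) [TopologicalSpace Y] (X : Set Y) : Ordinal.{0} :=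
  ⨆ x : X, locComplAt Y X (x : Y)

/-- The local complexity `Compl_locbar(X, Y) = sup_{y ∈ Y} Compl_y(X, Y)`. -/
def locComplBar (Y : Type u) [TopologicalSpace Y] (X : Set Y) : Ordinal.{0} :=
  ⨆ y : Y, locComplAt Y X y

/-! ### Trees on ω -/

/-- A tree on `ω`: a set of finite sequences closed under initial segments. -/
def IsTree (T : Set (List ℕ)) : Prop := ∀ ⦃s t : List ℕ⦄, s <+: t → t ∈ T → s ∈ T

/-- A tree is well-founded iff it carries no infinite branch. -/
def WellFoundedTree (T : Set (List ℕ)) : Prop := ¬ ∃ σ : ℕ → ℕ, ∀ k : ℕ, seqPrefix σ k ∈ T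

/-- `t` is a leaf of `T`: it belongs to `T` and has no immediate successor in `T`. -/
def IsLeafOf (T : Set (List ℕ)) (t : List ℕ) : Prop := t ∈ T ∧ ∀ n : ℕ, t ++ [n] ∉ T

/-- The tree `T^t = {s | t⌢s ∈ T}` corresponding to `t` in `T`. -/
def subtreeAt (T : Set (List ℕ)) (t : List ℕ) : Set (List ℕ) := { s | t ++ s ∈ T }

/-- The smallest tree containing a set `S` of finite sequences. -/
def clTr (S : Set (List ℕ)) : Set (List ℕ) := { u | ∃ s ∈ S, u <+: s }

/-- The leaf derivative: keep the elements having some proper extension in `T`. -/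
def leafDeriv (T : Set (List ℕ)) : Set (List ℕ) := { t ∈ T | ∃ s ∈ T, t <+: s ∧ t ≠ s }

/-- The derivative `D_iie`: keep the `t ∈ T` admitting infinitely many pairwise
incomparable extensions in `T` of pairwise different lengths. -/
def Diie (T : Set (List ℕ)) : Set (List ℕ) :=
  { t ∈ T | ∃ g : ℕ → List ℕ, (∀ n, g n ∈ T ∧ t <+: g n) ∧
      ∀ ⦃m n : ℕ⦄, m < n →
        (¬ g m <+: g n) ∧ (¬ g n <+: g m) ∧ (g m).length ≠ (g n).length }

/-- Transfinitely iterated derivative, starting from `cl_Tr S` and taking intersections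
at limit stages. -/
def iterDeriv (D : Set (List ℕ) → Set (List ℕ)) (S : Set (List ℕ)) (γ : Ordinal.{0}) :
    Set (List ℕ) :=
  Ordinal.limitRecOn γ (clTr S) (fun _ ih => D ih)
    (fun a _ ih => ⋂ b : Ordinal.{0}, ⋂ h : b < a, ih b h)

/-- The rank associated with the leaf derivative: the least `γ` such that the `(γ+1)`-st
iterated leaf derivative is empty, and `ω₁` if there is no such countable ordinal. -/
def leafRank (T : Set (List ℕ)) : Ordinal.{0} :=
  if ∃ γ : Ordinal.{0}, γ < omega1 ∧ iterDeriv leafDeriv T (γ + 1) = ∅ then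
    sInf { γ : Ordinal.{0} | iterDeriv leafDeriv T (γ + 1) = ∅ }
  else omega1

/-- `E` is the canonical extension of the `l(T)`-scheme `H` to the whole of `T`:
it agrees with `H` on the leaves of `T`, and at a non-leaf `t ∈ T` it is the union
(resp. the intersection) of its values at the immediate successors of `t` in `T` when
the leaf-rank of `T^t` is odd (resp. even). -/
def IsSchemeExtension (Y : Type u) [TopologicalSpace Y] (T : Set (List ℕ))
    (H E : List ℕ → Set Y) : Prop :=
  (∀ t, IsLeafOf T t → E t = H t) ∧
  (∀ t ∈ T, ¬ IsLeafOf T t → OddOrd (leafRank (subtreeAt T t)) →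
      E t = ⋃ n ∈ { n : ℕ | t ++ [n] ∈ T }, E (t ++ [n])) ∧
  (∀ t ∈ T, ¬ IsLeafOf T t → EvenOrd (leafRank (subtreeAt T t)) →
      E t = ⋂ n ∈ { n : ℕ | t ++ [n] ∈ T }, E (t ++ [n]))

/-- `H` (an `l(T)`-scheme of subsets of `X`) is a *universal simple `F_α`-representation*
of `X`: `r_l(T) ≤ α`, and for every space `Y` containing (a copy of) `X`, the extension
of the scheme of closures `(cl_Y (H t))_t` computes `X` at the root. -/
def HasUniversalSimpleRep (X : Type u) [TopologicalSpace X] (α : Ordinal.{0}) : Prop :=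
  ∃ (T : Set (List ℕ)) (H : List ℕ → Set X), IsTree T ∧ WellFoundedTree T ∧ [] ∈ T ∧
    leafRank T ≤ α ∧
    ∀ (Y : Type u) (_ : TopologicalSpace Y) (e : X → Y), IsEmbedding e →
      ∃ E : List ℕ → Set Y,
        IsSchemeExtension Y T (fun t => closure (e '' H t)) E ∧ E [] = Set.range e

/-! ### Canonical trees -/

/-- Auxiliary indices for the canonical trees: at a successor `a = b + 1` every index is
`b`, and at a countable limit the indices enumerate all ordinals `< a` injectively. -/
def canonIdx (a : Ordinal.{0}) (n : ℕ) : Ordinal.{0} :=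
  if hs : ∃ b, a = b + 1 then hs.choose
  else if hf : ∃ f : ℕ → Ordinal.{0}, Function.Injective f ∧ Set.range f = Set.Iio a then
    hf.choose n
  else 0

theorem canonIdx_lt {a : Ordinal.{0}} (h0 : a ≠ 0) (n : ℕ) : canonIdx a n < a := by
  unfold canonIdx
  split
  · next hs =>
      conv_rhs => rw [hs.choose_spec]
      rw [Ordinal.add_one_eq_succ]
      exact Order.lt_succ _
  · split
    · next hf =>
        have hmem : hf.choose n ∈ Set.range hf.choose := Set.mem_range_self n
        rw [hf.choose_spec.2] at hmem
        exact hmem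
    · exact pos_iff_ne_zero.mpr h0

/-- The canonical "maximal" trees `T_α` of leaf-rank `α < ω₁` (with `T_α = ω^{<ω}` for
`α ≥ ω₁`): `T_0 = {∅}`, `T_{α+1} = {∅} ∪ ⋃_n n⌢T_α`, and at countable limits
`T_α = {∅} ∪ ⋃_n n⌢T_{π_α(n)}` for an injective enumeration `π_α` of `α`. -/
def canonTree : Ordinal.{0} → Set (List ℕ) :=
  WellFounded.fix Ordinal.lt_wf (C := fun _ => Set (List ℕ)) fun a ih =>
    if h0 : a = 0 then {([] : List ℕ)}
    else if omega1 ≤ a then Set.univ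
    else {([] : List ℕ)} ∪ ⋃ n : ℕ, (List.cons n) '' ih (canonIdx a n) (canonIdx_lt h0 n)

/-- The canonical trees `T^c_α`: `T_{α'}` for even `α`, and `{∅} ∪ 1⌢T_{α'}` for odd `α`. -/
def canonTreeC (a : Ordinal.{0}) : Set (List ℕ) :=
  if EvenOrd a then canonTree (ordPrime a)
  else {([] : List ℕ)} ∪ (List.cons 1) '' canonTree (ordPrime a)

/-- The canonical trees `T^c_{α,i} = {∅} ∪ i⌢T_{α'}` (for odd `α`). -/
def canonTreeCi (a : Ordinal.{0}) (i : ℕ) : Set (List ℕ) :=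
  {([] : List ℕ)} ∪ (List.cons i) '' canonTree (ordPrime a)

/-! ### Admissible maps, `R_T` and regular representations -/

/-- An admissible map on a tree `T`: monotone w.r.t. extension, with
`|φ(t)| = t(0) + ⋯ + t(|t|-1)` for all `t ∈ T`. -/
def Admissible (T : Set (List ℕ)) (φ : List ℕ → List ℕ) : Prop :=
  (∀ ⦃s t : List ℕ⦄, s ∈ T → t ∈ T → s <+: t → φ s <+: φ t) ∧
  (∀ t ∈ T, (φ t).length = t.sum)

/-- `R_T(C)`: the points of `C(∅)` admitting an admissible witness map along `T`. -/
def RT {Y : Type u} (T : Set (List ℕ)) (C : List ℕ → Set Y) : Set Y :=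
  { x | x ∈ C [] ∧ ∃ φ : List ℕ → List ℕ, Admissible T φ ∧ ∀ t ∈ T, x ∈ C (φ t) }

/-- `R_α(C) = R_{T^c_α}(C)`. -/
def Ralpha {Y : Type u} (a : Ordinal.{0}) (C : List ℕ → Set Y) : Set Y :=
  RT (canonTreeC a) C

/-- A Suslin scheme `C` of subsets of `X ⊆ Y` is *complete on `X`*: it is a Suslin scheme
on `X` (it consists of subsets of `X` and the Suslin operation applied to it covers `X`)
such that every nontrivial filter containing, for each `n`, a set `C s` with `|s| = n`,
has an accumulation point in `X`. -/
def IsCompleteOn (Y : Type u) [TopologicalSpace Y] (X : Set Y) (C : List ℕ → Set Y) :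
    Prop :=
  IsSuslinScheme C ∧ (∀ s, C s ⊆ X) ∧ X ⊆ suslinOp C ∧
  ∀ F : Filter Y, F.NeBot → (∀ n : ℕ, ∃ s : List ℕ, s.length = n ∧ C s ∈ F) →
    ∃ x ∈ X, ClusterPt x F

/-- The tree `S_C(y)` of finite sequences `s` with `y ∈ cl_Y (C s)`. -/
def SCtree (Y : Type u) [TopologicalSpace Y] (C : List ℕ → Set Y) (y : Y) :
    Set (List ℕ) :=
  { s : List ℕ | y ∈ closure (C s) }

/-! ### Zoom spaces -/

/-- The set of isolated points of a topological space. -/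
def IsolPts (Y : Type u) [TopologicalSpace Y] : Set Y := { y | IsOpen ({y} : Set Y) }

/-- The underlying set of the zoom space `Z(Y, X)`: the non-isolated points of `Y`
together with the disjoint union of the spaces `X i`, `i ∈ I_Y`. -/
def ZoomCarrier (Y : Type u) [TopologicalSpace Y] (X : IsolPts Y → Type v) :
    Type (max u v) :=
  ({ y : Y // y ∉ IsolPts Y }) ⊕ ((i : IsolPts Y) × X i)

/-- The basic set `V_U ⊆ Z(Y, X)` associated with `U ⊆ Y`:
`V_U = (U ∖ I_Y) ∪ ⋃ {X i | i ∈ U ∩ I_Y}`. -/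
def zoomVSet (Y : Type u) [TopologicalSpace Y] (X : IsolPts Y → Type v) (U : Set Y) :
    Set (ZoomCarrier Y X) :=
  { z | Sum.elim (fun y : { y : Y // y ∉ IsolPts Y } => (y : Y) ∈ U)
      (fun p : (i : IsolPts Y) × X i => (p.1 : Y) ∈ U) z }

/-- The topology of the zoom space `Z(Y, X)`, generated by the open subsets of the
spaces `X i` together with the sets `V_U` for `U` open in `Y`. -/
instance zoomTopology (Y : Type u) [TopologicalSpace Y] (X : IsolPts Y → Type v)
    [∀ i, TopologicalSpace (X i)] : TopologicalSpace (ZoomCarrier Y X) :=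
  TopologicalSpace.generateFrom
    ({ B | ∃ (i : IsolPts Y) (W : Set (X i)), IsOpen W ∧
        B = Sum.inr '' ((Sigma.mk i) '' W) } ∪
     { B | ∃ U : Set Y, IsOpen U ∧ B = zoomVSet Y X U })

/-- The subset of `Z(Y, X)` which is the underlying set of the zoom space `Z(Ys, A)` of
a subspace `Ys ⊆ Y` with respect to subspaces `A i ⊆ X i`
(here the isolated points of `Ys` are identified with those of `Y`). -/
def zoomSub (Y : Type u) [TopologicalSpace Y] (X : IsolPts Y → Type v) (Ys : Set Y)
    (A : ∀ i : IsolPts Y, Set (X i)) : Set (ZoomCarrier Y X) :=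
  { z | Sum.elim (fun y : { y : Y // y ∉ IsolPts Y } => (y : Y) ∈ Ys)
      (fun p : (i : IsolPts Y) × X i => p.2 ∈ A p.1) z }

/-! ### Broom sets and broom spaces -/

/-- A forking sequence: a sequence of nonempty finite sequences with pairwise distinct
first entries. -/
def IsForking (f : ℕ → List ℕ) : Prop :=
  (∀ n, f n ≠ []) ∧ ∀ ⦃m n : ℕ⦄, m ≠ n → (f m).head? ≠ (f n).head?

/-- The hierarchy of finite broom sets: `B ∈ B_α` iff `IsBroomB α B`.
`B_0 = {{∅}}`; for odd `α`, `B_α = B_{<α} ∪ {h⌢B | B ∈ B_{α-1}, h ∈ ω^{<ω}}`; for even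
`α > 0`, `B_α = B_{<α} ∪ {⋃_n f_n⌢B_n | B_n ∈ B_{<α}, (f_n) a forking sequence}`. -/
inductive IsBroomB : Ordinal.{0} → Set (List ℕ) → Prop
  | base : IsBroomB 0 {[]}
  | mono {β α : Ordinal.{0}} {B : Set (List ℕ)} : β < α → IsBroomB β B → IsBroomB α B
  | odd {β : Ordinal.{0}} {B : Set (List ℕ)} (h : List ℕ) : EvenOrd β → IsBroomB β B →
      IsBroomB (β + 1) ((fun s => h ++ s) '' B)
  | even {α : Ordinal.{0}} {f : ℕ → List ℕ} {Bs : ℕ → Set (List ℕ)}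
      (g : ℕ → Ordinal.{0}) :
      0 < α → EvenOrd α → IsForking f →
      (∀ n : ℕ, g n < α) → (∀ n : ℕ, IsBroomB (g n) (Bs n)) →
      IsBroomB α (⋃ n : ℕ, (fun s => f n ++ s) '' Bs n)

/-- The infinite sequence `s⌢ν` obtained by extending the finite sequence `s` by `ν`. -/
def seqAppend (s : List ℕ) (ν : ℕ → ℕ) : ℕ → ℕ :=
  fun k => if h : k < s.length then s.get ⟨k, h⟩ else ν (k - s.length)

/-- `A` is a broom-extension of `B`:
`A = {s⌢f^s_n⌢ν^s_n | s ∈ B, n ∈ ω}` for forking sequences `(f^s_n)_n, s ∈ B`, and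
points `ν^s_n ∈ ω^ω`. -/
def IsBroomExtension (B : Set (List ℕ)) (A : Set (ℕ → ℕ)) : Prop :=
  ∃ (f : List ℕ → ℕ → List ℕ) (ν : List ℕ → ℕ → (ℕ → ℕ)),
    (∀ s ∈ B, IsForking (f s)) ∧
    A = { σ : ℕ → ℕ | ∃ s ∈ B, ∃ n : ℕ, σ = seqAppend (s ++ f s n) (ν s n) }

/-- The hierarchy of infinite broom sets: `A ∈ A_α` iff `A` is a broom-extension of some
`B ∈ B_α`. -/
def IsBroomA (α : Ordinal.{0}) (A : Set (ℕ → ℕ)) : Prop :=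
  ∃ B : Set (List ℕ), IsBroomB α B ∧ IsBroomExtension B A

/-- `u` is a finite initial segment of the infinite sequence `σ`. -/
def InfExtends (u : List ℕ) (σ : ℕ → ℕ) : Prop := seqPrefix σ u.length = u

/-- The tree of all finite initial segments of members of a set of infinite sequences. -/
def clTrInf (S : Set (ℕ → ℕ)) : Set (List ℕ) := { u | ∃ σ ∈ S, InfExtends u σ }

/-- The broom space `T_𝒜` on `ω^ω ∪ {∞}` (with `∞ = none`): every point of `ω^ω` is
isolated, and the neighborhood subbasis at `∞` consists of the complements of single
points of `ω^ω` and of the complements of the sets `A ∈ 𝒜`. -/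
def broomTop (𝒜 : Set (Set (ℕ → ℕ))) : TopologicalSpace (Option (ℕ → ℕ)) :=
  TopologicalSpace.generateFrom
    ({ S | ∃ σ : ℕ → ℕ, S = {Option.some σ} } ∪
     { S | ∃ σ : ℕ → ℕ, S = insert Option.none (Option.some '' ({σ}ᶜ)) } ∪
     { S | ∃ A ∈ 𝒜, S = insert Option.none (Option.some '' Aᶜ) })



section AuxLemmas
set_option linter.unusedSectionVars false








-- parity

theorem evenOrd_or_oddOrd (a : Ordinal.{0}) : EvenOrd a ∨ OddOrd a := by
  have h2 : a % 2 < 2 := Ordinal.mod_lt a (by norm_num)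
  have : a % 2 ≤ 1 := by
    have h21 : (2 : Ordinal.{0}) = Order.succ 1 := by
      rw [Order.succ_eq_add_one]; norm_num
    exact Order.lt_succ_iff.1 (h21 ▸ h2)
  rcases Ordinal.le_one_iff.1 this with h | h
  · exact Or.inl h
  · exact Or.inr h

theorem OddOrd.exists_succ {a : Ordinal.{0}} (h : OddOrd a) : ∃ b, a = b + 1 := by
  refine ⟨2 * (a / 2), ?_⟩
  conv_lhs => rw [← Ordinal.div_add_mod a 2]
  rw [h]

theorem evenOrd_of_isLimit {a : Ordinal.{0}} (h : Order.IsSuccLimit a) : EvenOrd a := by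
  rcases evenOrd_or_oddOrd a with he | ho
  · exact he
  · exfalso
    obtain ⟨b, rfl⟩ := ho.exists_succ
    rw [Ordinal.add_one_eq_succ] at h
    exact (Order.not_isSuccLimit_succ b) h

theorem fborel_def (Y : Type u) [TopologicalSpace Y] (a : Ordinal.{0}) :
    FBorel Y a = if a = 0 then { F | IsClosed F }
    else if EvenOrd a then
      { S | ∃ f : ℕ → Set Y, (∀ n, ∃ b, ∃ _ : b < a, f n ∈ FBorel Y b) ∧ S = ⋂ n, f n }
    else
      { S | ∃ f : ℕ → Set Y, (∀ n, ∃ b, ∃ _ : b < a, f n ∈ FBorel Y b) ∧ S = ⋃ n, f n } :=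
  WellFounded.fix_eq _ _ _

-- FBorel basics
variable {Y : Type u} {Z : Type v} [TopologicalSpace Y] [TopologicalSpace Z]

theorem isClosed_mem_fborel {F : Set Y} (hF : IsClosed F) (a : Ordinal.{0}) :
    F ∈ FBorel Y a := by
  induction a using Ordinal.induction with
  | h a ih =>
    rw [fborel_def]
    rcases eq_or_ne a 0 with rfl | h0
    · simpa using hF
    · rw [if_neg h0]
      have hpos : (0 : Ordinal.{0}) < a := pos_iff_ne_zero.2 h0
      split
      · exact ⟨fun _ => F, fun n => ⟨0, hpos, ih 0 hpos⟩, (Set.iInter_const F).symm⟩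
      · exact ⟨fun _ => F, fun n => ⟨0, hpos, ih 0 hpos⟩, (Set.iUnion_const F).symm⟩

theorem fborel_mono {b a : Ordinal.{0}} (h : b ≤ a) : FBorel Y b ⊆ FBorel Y a := by
  rcases eq_or_lt_of_le h with rfl | hlt
  · exact subset_rfl
  · intro X hX
    have h0 : a ≠ 0 := fun h0 => by simp [h0] at hlt
    rw [fborel_def, if_neg h0]
    split
    · exact ⟨fun _ => X, fun n => ⟨b, hlt, hX⟩, (Set.iInter_const X).symm⟩
    · exact ⟨fun _ => X, fun n => ⟨b, hlt, hX⟩, (Set.iUnion_const X).symm⟩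

theorem fborel_preimage {f : Y → Z} (hf : Continuous f) {a : Ordinal.{0}} {S : Set Z}
    (hS : S ∈ FBorel Z a) : f ⁻¹' S ∈ FBorel Y a := by
  induction a using Ordinal.induction generalizing S with
  | h a ih =>
    rw [fborel_def] at hS
    rw [fborel_def]
    rcases eq_or_ne a 0 with rfl | h0
    · simp only [if_pos rfl] at hS ⊢
      exact hS.preimage hf
    · rw [if_neg h0] at hS ⊢
      split
      · next he =>
        rw [if_pos he] at hS
        obtain ⟨g, hg, rfl⟩ := hS
        refine ⟨fun n => f ⁻¹' g n, fun n => ?_, by rw [Set.preimage_iInter]⟩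
        obtain ⟨b, hb, hgb⟩ := hg n
        exact ⟨b, hb, ih b hb hgb⟩
      · next he =>
        rw [if_neg he] at hS
        obtain ⟨g, hg, rfl⟩ := hS
        refine ⟨fun n => f ⁻¹' g n, fun n => ?_, by rw [Set.preimage_iUnion]⟩
        obtain ⟨b, hb, hgb⟩ := hg n
        exact ⟨b, hb, ih b hb hgb⟩

theorem fborel_inter {a : Ordinal.{0}} {S T : Set Y}
    (hS : S ∈ FBorel Y a) (hT : T ∈ FBorel Y a) : S ∩ T ∈ FBorel Y a := by
  induction a using Ordinal.induction generalizing S T with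
  | h a ih =>
    rcases eq_or_ne a 0 with rfl | h0
    · rw [fborel_def, if_pos rfl] at hS hT ⊢
      exact hS.inter hT
    · rw [fborel_def, if_neg h0] at hS hT ⊢
      split
      · next he =>
        rw [if_pos he] at hS hT
        obtain ⟨g, hg, rfl⟩ := hS
        obtain ⟨g', hg', rfl⟩ := hT
        refine ⟨fun n => if n % 2 = 0 then g (n / 2) else g' (n / 2), fun n => ?_, ?_⟩
        · by_cases hn : n % 2 = 0
        
          · simpa [hn] using hg (n / 2)
          · simpa [hn] using hg' (n / 2)
        · apply Set.eq_of_subset_of_subset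
          · intro x hx
            refine Set.mem_iInter.2 fun n => ?_
            split
            · exact Set.mem_iInter.1 hx.1 _
            · exact Set.mem_iInter.1 hx.2 _
          · intro x hx
            constructor
            · refine Set.mem_iInter.2 fun n => ?_
              have := Set.mem_iInter.1 hx (2 * n)
              simpa [Nat.mul_div_cancel_left, Nat.mul_mod_right] using this
            · refine Set.mem_iInter.2 fun n => ?_
              have := Set.mem_iInter.1 hx (2 * n + 1)
              have h1 : (2 * n + 1) % 2 = 1 := by omega
              have h2 : (2 * n + 1) / 2 = n := by omega
              simpa [h1, h2] using this
      · next he =>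
        rw [if_neg he] at hS hT
        obtain ⟨g, hg, rfl⟩ := hS
        obtain ⟨g', hg', rfl⟩ := hT
        refine ⟨fun k => g (Nat.unpair k).1 ∩ g' (Nat.unpair k).2, fun k => ?_, ?_⟩
        · obtain ⟨b, hb, hgb⟩ := hg (Nat.unpair k).1
          obtain ⟨c, hc, hgc⟩ := hg' (Nat.unpair k).2
          refine ⟨max b c, max_lt hb hc, ih _ (max_lt hb hc)
            (fborel_mono (le_max_left _ _) hgb) (fborel_mono (le_max_right _ _) hgc)⟩
        · apply Set.eq_of_subset_of_subset
          · rintro x ⟨hx1, hx2⟩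
            obtain ⟨n, hn⟩ := Set.mem_iUnion.1 hx1
            obtain ⟨m, hm⟩ := Set.mem_iUnion.1 hx2
            refine Set.mem_iUnion.2 ⟨Nat.pair n m, ?_⟩
            simp only [Nat.unpair_pair]
            exact ⟨hn, hm⟩
          · rintro x hx
            obtain ⟨k, hk1, hk2⟩ := Set.mem_iUnion.1 hx
            exact ⟨Set.mem_iUnion.2 ⟨_, hk1⟩, Set.mem_iUnion.2 ⟨_, hk2⟩⟩

set_option linter.unusedSectionVars false







variable {Y : Type u} {Z : Type v} [TopologicalSpace Y] [TopologicalSpace Z]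

@[simp] theorem seqPrefix_length (σ : ℕ → ℕ) (k : ℕ) : (seqPrefix σ k).length = k := by
  simp [seqPrefix]

theorem getD_seqPrefix (σ : ℕ → ℕ) {m k : ℕ} (h : m < k) :
    (seqPrefix σ k).getD m 0 = σ m := by
  have hl : m < (seqPrefix σ k).length := by simpa using h
  rw [List.getD_eq_getElem _ _ hl]
  simp [seqPrefix]

theorem seqPrefix_succ_cons (ρ : ℕ → ℕ) (k : ℕ) :
    seqPrefix ρ (k + 1) = ρ 0 :: seqPrefix (fun i => ρ (i + 1)) k := by
  simp [seqPrefix, List.ofFn_succ]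

theorem mem_suslinOp {C : List ℕ → Set Y} {x : Y} :
    x ∈ suslinOp C ↔ ∃ σ : ℕ → ℕ, ∀ k, x ∈ C (seqPrefix σ k) := by
  simp [suslinOp]

theorem isClosed_mem_suslinF {F : Set Y} (hF : IsClosed F) : F ∈ SuslinF Y := by
  refine ⟨fun _ => F, fun _ => hF, ?_⟩
  apply Set.eq_of_subset_of_subset
  · intro x hx
    exact mem_suslinOp.2 ⟨fun _ => 0, fun _ => hx⟩
  · intro x hx
    obtain ⟨σ, hσ⟩ := mem_suslinOp.1 hx
    exact hσ 0

theorem suslinF_iUnion {S : ℕ → Set Y} (hS : ∀ n, S n ∈ SuslinF Y) :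
    (⋃ n, S n) ∈ SuslinF Y := by
  choose C hC hEq using hS
  refine ⟨fun s => match s with
    | [] => Set.univ
    | n :: t => C n t, fun s => by cases s <;> simp [isClosed_univ, hC], ?_⟩
  apply Set.eq_of_subset_of_subset
  · intro x hx
    obtain ⟨n, hn⟩ := Set.mem_iUnion.1 hx
    rw [hEq n] at hn
    obtain ⟨σ, hσ⟩ := mem_suslinOp.1 hn
    refine mem_suslinOp.2 ⟨fun k => if k = 0 then n else σ (k - 1), fun k => ?_⟩
    cases k with
    | zero => simp [seqPrefix]
    | succ m =>
      rw [seqPrefix_succ_cons]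
      simpa using hσ m
  · intro x hx
    obtain ⟨σ, hσ⟩ := mem_suslinOp.1 hx
    refine Set.mem_iUnion.2 ⟨σ 0, ?_⟩
    rw [hEq (σ 0)]
    refine mem_suslinOp.2 ⟨fun i => σ (i + 1), fun k => ?_⟩
    have := hσ (k + 1)
    rwa [seqPrefix_succ_cons] at this

/-- `rowLen n k` : the least `m` with `k ≤ Nat.pair n m`. -/
def rowLen (n k : ℕ) : ℕ := Nat.find (⟨k, Nat.right_le_pair n k⟩ : ∃ m, k ≤ Nat.pair n m)

theorem pair_lt_of_lt_rowLen {n k i : ℕ} (h : i < rowLen n k) : Nat.pair n i < k := by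
  have := Nat.find_min (⟨k, Nat.right_le_pair n k⟩ : ∃ m, k ≤ Nat.pair n m) (m := i) h
  exact Nat.lt_of_not_le this

theorem rowLen_pair (n m : ℕ) : rowLen n (Nat.pair n m) = m := by
  rw [rowLen, Nat.find_eq_iff]
  exact ⟨le_rfl, fun i hi => not_le.2 (Nat.pair_lt_pair_right n hi)⟩

def rowList (n : ℕ) (s : List ℕ) : List ℕ :=
  List.ofFn fun i : Fin (rowLen n s.length) => s.getD (Nat.pair n i) 0

theorem rowList_seqPrefix (n : ℕ) (ρ : ℕ → ℕ) (k : ℕ) :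
    rowList n (seqPrefix ρ k) = seqPrefix (fun j => ρ (Nat.pair n j)) (rowLen n k) := by
  apply List.ext_getElem
  · simp [rowList, seqPrefix]
  · intro i h1 h2
    simp only [rowList, seqPrefix, List.getElem_ofFn]
    have hi : i < rowLen n k := by simpa [rowList, seqPrefix] using h2
    have : Nat.pair n i < k := pair_lt_of_lt_rowLen hi
    exact getD_seqPrefix ρ this

theorem suslinF_iInter {S : ℕ → Set Y} (hS : ∀ n, S n ∈ SuslinF Y) :
    (⋂ n, S n) ∈ SuslinF Y := by
  choose C hC hEq using hS
  refine ⟨fun s => ⋂ n, C n (rowList n s), fun s => isClosed_iInter fun n => hC n _, ?_⟩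
  apply Set.eq_of_subset_of_subset
  · intro x hx
    have hx' : ∀ n, ∃ σ : ℕ → ℕ, ∀ k, x ∈ C n (seqPrefix σ k) := by
      intro n
      have := Set.mem_iInter.1 hx n
      rw [hEq n] at this
      exact mem_suslinOp.1 this
    choose σ hσ using hx'
    refine mem_suslinOp.2 ⟨fun m => σ (Nat.unpair m).1 (Nat.unpair m).2, fun k => ?_⟩
    refine Set.mem_iInter.2 fun n => ?_
    rw [rowList_seqPrefix]
    have hfun : (fun j => σ (Nat.unpair (Nat.pair n j)).1 (Nat.unpair (Nat.pair n j)).2)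
        = σ n := by
      funext j; rw [Nat.unpair_pair]
    rw [hfun]
    exact hσ n _
  · intro x hx
    obtain ⟨ρ, hρ⟩ := mem_suslinOp.1 hx
    refine Set.mem_iInter.2 fun n => ?_
    rw [hEq n]
    refine mem_suslinOp.2 ⟨fun j => ρ (Nat.pair n j), fun m => ?_⟩
    have := Set.mem_iInter.1 (hρ (Nat.pair n m)) n
    rwa [rowList_seqPrefix, rowLen_pair] at this

theorem suslinF_inter {S T : Set Y} (hS : S ∈ SuslinF Y) (hT : T ∈ SuslinF Y) :
    S ∩ T ∈ SuslinF Y := by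
  have : S ∩ T = ⋂ n : ℕ, if n = 0 then S else T := by
    apply Set.eq_of_subset_of_subset
    · rintro x ⟨h1, h2⟩
      refine Set.mem_iInter.2 fun n => ?_
      split <;> assumption
    · intro x hx
      have h0 := Set.mem_iInter.1 hx 0
      have h1 := Set.mem_iInter.1 hx 1
      simp at h0 h1
      exact ⟨h0, h1⟩
  rw [this]
  refine suslinF_iInter fun n => ?_
  split <;> assumption

theorem suslinF_preimage {f : Y → Z} (hf : Continuous f) {S : Set Z}
    (hS : S ∈ SuslinF Z) : f ⁻¹' S ∈ SuslinF Y := by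
  obtain ⟨C, hC, rfl⟩ := hS
  refine ⟨fun s => f ⁻¹' C s, fun s => (hC s).preimage hf, ?_⟩
  simp [suslinOp, Set.preimage_iUnion, Set.preimage_iInter]

theorem fborel_subset_suslinF {a : Ordinal.{0}} : FBorel Y a ⊆ SuslinF Y := by
  induction a using Ordinal.induction with
  | h a ih =>
    intro S hS
    rw [fborel_def] at hS
    rcases eq_or_ne a 0 with rfl | h0
    · rw [if_pos rfl] at hS
      exact isClosed_mem_suslinF hS
    · rw [if_neg h0] at hS
      split at hS
      · obtain ⟨g, hg, rfl⟩ := hS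
        refine suslinF_iInter fun n => ?_
        obtain ⟨b, hb, hgb⟩ := hg n
        exact ih b hb hgb
      · obtain ⟨g, hg, rfl⟩ := hS
        refine suslinF_iUnion fun n => ?_
        obtain ⟨b, hb, hgb⟩ := hg n
        exact ih b hb hgb






variable {Y : Type u} {Z : Type v} [TopologicalSpace Y] [TopologicalSpace Z]

theorem fclass_omega1 (Y : Type u) [TopologicalSpace Y] :
    FClass Y omega1 = SuslinF Y := if_neg (lt_irrefl _)

theorem fclass_mono {a b : Ordinal.{0}} (hab : a ≤ b) (hb : b ≤ omega1) :
    FClass Y a ⊆ FClass Y b := by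
  intro X hX
  rcases eq_or_lt_of_le hab with rfl | hlt
  · exact hX
  · have ha : a < omega1 := lt_of_lt_of_le hlt hb
    rw [FClass, if_pos ha] at hX
    rw [FClass]
    split
    · exact fborel_mono hab hX
    · exact fborel_subset_suslinF hX

theorem fclass_inter {a : Ordinal.{0}} {S T : Set Y}
    (hS : S ∈ FClass Y a) (hT : T ∈ FClass Y a) : S ∩ T ∈ FClass Y a := by
  rw [FClass] at hS hT ⊢
  split at hS <;> rename_i h
  · rw [if_pos h] at hT
    rw [if_pos h]
    exact fborel_inter hS hT
  · rw [if_neg h] at hT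
    rw [if_neg h]
    exact suslinF_inter hS hT

theorem fclass_preimage {f : Y → Z} (hf : Continuous f) {a : Ordinal.{0}} {S : Set Z}
    (hS : S ∈ FClass Z a) : f ⁻¹' S ∈ FClass Y a := by
  rw [FClass] at hS ⊢
  split at hS <;> rename_i h <;> [rw [if_pos h]; rw [if_neg h]]
  · exact fborel_preimage hf hS
  · exact suslinF_preimage hf hS

theorem complIn_le_of_mem {X : Set Y} {a : Ordinal.{0}} (ha : a ≤ omega1)
    (hX : X ∈ FClass Y a) : ComplIn Y X ≤ a :=
  csInf_le' ⟨ha, hX⟩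

theorem complIn_spec {X : Set Y} (h : X ∈ SuslinF Y) :
    ComplIn Y X ≤ omega1 ∧ X ∈ FClass Y (ComplIn Y X) := by
  have : ComplIn Y X ∈ { a : Ordinal.{0} | a ≤ omega1 ∧ X ∈ FClass Y a } :=
    csInf_mem ⟨omega1, le_rfl, by rw [fclass_omega1]; exact h⟩
  exact this

theorem exists_enum_Iio {a : Ordinal.{0}} (h0 : a ≠ 0) (ha : a < omega1) :
    ∃ g : ℕ → Ordinal.{0}, (∀ n, g n < a) ∧ ∀ b < a, ∃ n, g n = b := by
  have hcard : a.card ≤ Cardinal.aleph0 := by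
    have : a < (Cardinal.aleph 1).ord := by
      rw [Cardinal.ord_aleph]; exact ha
    have := Cardinal.lt_ord.1 this
    rwa [← Cardinal.succ_aleph0, Order.lt_succ_iff] at this
  have hc : (Set.Iio a).Countable := by
    rw [← Set.countable_coe_iff, ← Cardinal.mk_le_aleph0_iff, Ordinal.mk_Iio_ordinal]
    calc Cardinal.lift.{1} a.card ≤ Cardinal.lift.{1} Cardinal.aleph0 :=
          Cardinal.lift_le.2 hcard
      _ = Cardinal.aleph0 := Cardinal.lift_aleph0
  obtain ⟨g, hg⟩ := hc.exists_eq_range ⟨0, pos_iff_ne_zero.2 h0⟩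
  refine ⟨g, fun n => ?_, fun b hb => ?_⟩
  · have : g n ∈ Set.Iio a := by rw [hg]; exact Set.mem_range_self n
    exact this
  · have : b ∈ Set.range g := by rw [← hg]; exact hb
    obtain ⟨n, hn⟩ := this
    exact ⟨n, hn⟩


section Zoom

variable (Yb : Type u) [TopologicalSpace Yb] (Xb : IsolPts Yb → Type u)
  [∀ i, TopologicalSpace (Xb i)]

/-- The collapse map `Z(Y,X) → Y`. -/
def zoomQ : ZoomCarrier Yb Xb → Yb :=
  Sum.elim (fun y => (y : Yb)) (fun p => (p.1 : Yb))

theorem zoomQ_preimage (U : Set Yb) :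
    zoomQ Yb Xb ⁻¹' U = zoomVSet Yb Xb U := by
  ext z; cases z <;> rfl

theorem isOpen_zoomVSet {U : Set Yb} (hU : IsOpen U) : IsOpen (zoomVSet Yb Xb U) :=
  TopologicalSpace.isOpen_generateFrom_of_mem (Or.inr ⟨U, hU, rfl⟩)

theorem isOpen_zoomInr (i : IsolPts Yb) {W : Set (Xb i)} (hW : IsOpen W) :
    IsOpen (Sum.inr '' ((Sigma.mk i) '' W) : Set (ZoomCarrier Yb Xb)) :=
  TopologicalSpace.isOpen_generateFrom_of_mem (Or.inl ⟨i, W, hW, rfl⟩)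

theorem continuous_zoomQ : Continuous (zoomQ Yb Xb) :=
  continuous_def.2 fun U hU => by
    rw [zoomQ_preimage]; exact isOpen_zoomVSet Yb Xb hU

/-- The inclusion of `X i` into the zoom space. -/
def zoomE (i : IsolPts Yb) : Xb i → ZoomCarrier Yb Xb := fun x => Sum.inr ⟨i, x⟩

theorem continuous_zoomE (i : IsolPts Yb) : Continuous (zoomE Yb Xb i) := by
  rw [show (zoomTopology Yb Xb : TopologicalSpace (ZoomCarrier Yb Xb)) =
    TopologicalSpace.generateFrom _ from rfl] at *
  refine continuous_generateFrom_iff.2 ?_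
  rintro B (⟨j, W, hW, rfl⟩ | ⟨U, hU, rfl⟩)
  · by_cases hij : i = j
    · subst hij
      have : zoomE Yb Xb i ⁻¹' (Sum.inr '' ((Sigma.mk i) '' W)) = W := by
        ext x
        simp only [zoomE, Set.mem_preimage, Set.mem_image]
        constructor
        · rintro ⟨p, ⟨w, hw, rfl⟩, heq⟩
          have h2 := Sum.inr_injective heq
          injection h2 with h3 h4
          exact h4 ▸ hw
        · intro hx
          exact ⟨⟨i, x⟩, ⟨x, hx, rfl⟩, rfl⟩
      exact (congrArg IsOpen this).mpr hW
    · have : zoomE Yb Xb i ⁻¹' (Sum.inr '' ((Sigma.mk j) '' W)) = ∅ := by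
        ext x
        simp only [zoomE, Set.mem_preimage, Set.mem_image, Set.mem_empty_iff_false,
          iff_false]
        rintro ⟨p, ⟨w, hw, rfl⟩, heq⟩
        have h2 := Sum.inr_injective heq
        exact hij (congrArg Sigma.fst h2).symm
      exact (congrArg IsOpen this).mpr isOpen_empty
  · by_cases hi : (i : Yb) ∈ U
    · have : zoomE Yb Xb i ⁻¹' zoomVSet Yb Xb U = Set.univ := by
        ext x; exact iff_of_true hi trivial
      rw [this]; exact isOpen_univ
    · have : zoomE Yb Xb i ⁻¹' zoomVSet Yb Xb U = ∅ := by
        ext x; exact iff_of_false hi id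
      rw [this]; exact isOpen_empty

theorem zoomE_preimage_zoomSub (i : IsolPts Yb) (Ys : Set Yb)
    (A : ∀ i : IsolPts Yb, Set (Xb i)) :
    zoomE Yb Xb i ⁻¹' zoomSub Yb Xb Ys A = A i := rfl

end Zoom
section Zoom2

variable (Yb : Type u) [TopologicalSpace Yb] (Xb : IsolPts Yb → Type u)
  [∀ i, TopologicalSpace (Xb i)]

/-- A section `Y → Z(Y,X)` determined by a choice of points `pt i ∈ X i`. -/
def zoomS (pt : ∀ i : IsolPts Yb, Xb i) : Yb → ZoomCarrier Yb Xb := fun y =>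
  if h : y ∈ IsolPts Yb then Sum.inr ⟨⟨y, h⟩, pt ⟨y, h⟩⟩ else Sum.inl ⟨y, h⟩

theorem zoomS_mem_inr_iff (pt : ∀ i : IsolPts Yb, Xb i) (i : IsolPts Yb)
    (W : Set (Xb i)) (y : Yb) :
    zoomS Yb Xb pt y ∈ (Sum.inr '' ((Sigma.mk i) '' W) : Set (ZoomCarrier Yb Xb)) ↔
      y = (i : Yb) ∧ pt i ∈ W := by
  constructor
  · rintro ⟨p, ⟨w, hw, rfl⟩, heq⟩
    by_cases h : y ∈ IsolPts Yb
    · rw [zoomS] at heq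
      replace heq := heq.trans (dif_pos h)
      have h2 := Sum.inr_injective heq
      have h3 : i = ⟨y, h⟩ := congrArg Sigma.fst h2
      subst h3
      injection h2 with h4 h5
      exact ⟨rfl, h5 ▸ hw⟩
    · rw [zoomS] at heq
      exact absurd (heq.trans (dif_neg h)) Sum.inr_ne_inl
  · rintro ⟨rfl, hw⟩
    have h : (i : Yb) ∈ IsolPts Yb := i.2
    have hi : (⟨(i : Yb), h⟩ : IsolPts Yb) = i := Subtype.coe_eta i h
    refine ⟨⟨i, pt i⟩, ⟨pt i, hw, rfl⟩, ?_⟩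
    rw [zoomS]; exact (dif_pos h (t := fun h => (Sum.inr ⟨⟨(i : Yb), h⟩, pt ⟨i, h⟩⟩ : ZoomCarrier Yb Xb)) (e := fun h => (Sum.inl ⟨(i : Yb), h⟩ : ZoomCarrier Yb Xb))).symm

theorem continuous_zoomS (pt : ∀ i : IsolPts Yb, Xb i) : Continuous (zoomS Yb Xb pt) := by
  rw [show (zoomTopology Yb Xb : TopologicalSpace (ZoomCarrier Yb Xb)) =
    TopologicalSpace.generateFrom _ from rfl]
  refine continuous_generateFrom_iff.2 ?_
  rintro B (⟨i, W, hW, rfl⟩ | ⟨U, hU, rfl⟩)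
  · by_cases hw : pt i ∈ W
    · have : zoomS Yb Xb pt ⁻¹' (Sum.inr '' ((Sigma.mk i) '' W)) = {(i : Yb)} := by
        ext y
        rw [Set.mem_preimage, zoomS_mem_inr_iff]
        simp [hw]
      refine (congrArg IsOpen this).mpr ?_
      exact i.2
    · have : zoomS Yb Xb pt ⁻¹' (Sum.inr '' ((Sigma.mk i) '' W)) = ∅ := by
        ext y
        rw [Set.mem_preimage, zoomS_mem_inr_iff]
        simp [hw]
      refine (congrArg IsOpen this).mpr ?_
      exact isOpen_empty
  · have : zoomS Yb Xb pt ⁻¹' zoomVSet Yb Xb U = U := by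
      ext y
      by_cases h : y ∈ IsolPts Yb
      · rw [Set.mem_preimage, show zoomS Yb Xb pt y = _ from dif_pos h]; exact Iff.rfl
      · rw [Set.mem_preimage, show zoomS Yb Xb pt y = _ from dif_neg h]; exact Iff.rfl
    rw [this]
    exact hU

theorem zoomS_preimage_zoomSub (pt : ∀ i : IsolPts Yb, Xb i) (Ys : Set Yb)
    (A : ∀ i : IsolPts Yb, Set (Xb i)) (hIsol : ∀ i : IsolPts Yb, (i : Yb) ∈ Ys)
    (hpt : ∀ i, pt i ∈ A i) :
    zoomS Yb Xb pt ⁻¹' zoomSub Yb Xb Ys A = Ys := by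
  ext y
  by_cases h : y ∈ IsolPts Yb
  · rw [Set.mem_preimage, show zoomS Yb Xb pt y = _ from dif_pos h]
    exact iff_of_true (hpt _) (hIsol ⟨y, h⟩)
  · rw [Set.mem_preimage, show zoomS Yb Xb pt y = _ from dif_neg h]
    exact Iff.rfl

/-- The amalgam of a family of subsets of the `X i` inside the zoom space. -/
def Amal (B : ∀ i : IsolPts Yb, Set (Xb i)) : Set (ZoomCarrier Yb Xb) :=
  { z | Sum.elim (fun _ => True) (fun p : (i : IsolPts Yb) × Xb i => p.2 ∈ B p.1) z }

theorem amal_iInter (B : ∀ i : IsolPts Yb, ℕ → Set (Xb i)) :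
    Amal Yb Xb (fun i => ⋂ n, B i n) = ⋂ n, Amal Yb Xb (fun i => B i n) := by
  ext z
  cases z with
  | inl y => exact iff_of_true trivial (Set.mem_iInter.2 fun _ => trivial)
  | inr p => exact (Set.mem_iInter (x := p.2) (s := fun n => B p.1 n)).trans (Set.mem_iInter (x := (Sum.inr p : ZoomCarrier Yb Xb)) (s := fun n => Amal Yb Xb fun i => B i n)).symm

theorem amal_iUnion (B : ∀ i : IsolPts Yb, ℕ → Set (Xb i)) :
    Amal Yb Xb (fun i => ⋃ n, B i n) = ⋃ n, Amal Yb Xb (fun i => B i n) := by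
  ext z
  cases z with
  | inl y => exact iff_of_true trivial (Set.mem_iUnion.2 ⟨0, trivial⟩)
  | inr p => exact (Set.mem_iUnion (x := p.2) (s := fun n => B p.1 n)).trans (Set.mem_iUnion (x := (Sum.inr p : ZoomCarrier Yb Xb)) (s := fun n => Amal Yb Xb fun i => B i n)).symm

theorem amal_closed {B : ∀ i : IsolPts Yb, Set (Xb i)} (hB : ∀ i, IsClosed (B i)) :
    IsClosed (Amal Yb Xb B) := by
  rw [← isOpen_compl_iff]
  have : (Amal Yb Xb B)ᶜ = ⋃ i : IsolPts Yb, Sum.inr '' ((Sigma.mk i) '' (B i)ᶜ) := by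
    ext z
    cases z with
    | inl y =>
      refine iff_of_false (fun h => h trivial) fun h => ?_
      obtain ⟨i, q, _, hq⟩ := Set.mem_iUnion.1 h
      exact Sum.inr_ne_inl hq
    | inr p =>
      obtain ⟨i0, x0⟩ := p
      show x0 ∈ (B i0)ᶜ ↔ _
      refine Iff.trans ?_ (Set.mem_iUnion (x := (Sum.inr ⟨i0, x0⟩ : ZoomCarrier Yb Xb)) (s := fun i : IsolPts Yb => (Sum.inr '' ((Sigma.mk i) '' (B i)ᶜ) : Set (ZoomCarrier Yb Xb)))).symm
      constructor
      · intro hp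
        exact ⟨i0, ⟨⟨i0, x0⟩, ⟨x0, hp, rfl⟩, rfl⟩⟩
      · rintro ⟨i, ⟨q, ⟨w, hw, rfl⟩, heq⟩⟩
        have h2 := Sum.inr_injective heq
        have h3 : i = i0 := congrArg Sigma.fst h2
        subst h3
        injection h2 with h4 h5
        exact h5 ▸ hw
  rw [this]
  exact isOpen_iUnion fun i => isOpen_zoomInr Yb Xb i (hB i).isOpen_compl

theorem amal_suslinOp (C : ∀ i : IsolPts Yb, List ℕ → Set (Xb i)) :
    Amal Yb Xb (fun i => suslinOp (C i)) =
      suslinOp (fun s => Amal Yb Xb (fun i => C i s)) := by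
  ext z
  cases z with
  | inl y =>
    refine iff_of_true trivial (mem_suslinOp.2 ⟨fun _ => 0, fun _ => trivial⟩)
  | inr p =>
    exact (mem_suslinOp (C := C p.1) (x := p.2)).trans (mem_suslinOp (x := (Sum.inr p : ZoomCarrier Yb Xb)) (C := fun s => Amal Yb Xb fun i => C i s)).symm

theorem amal_suslinF {B : ∀ i : IsolPts Yb, Set (Xb i)}
    (hB : ∀ i, B i ∈ SuslinF (Xb i)) : Amal Yb Xb B ∈ SuslinF (ZoomCarrier Yb Xb) := by
  choose C hC hEq using hB
  have hBC : B = fun i => suslinOp (C i) := funext hEq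
  refine ⟨fun s => Amal Yb Xb (fun i => C i s),
    fun s => amal_closed Yb Xb (fun i => hC i s), ?_⟩
  rw [hBC, amal_suslinOp]

theorem amal_fborel {a : Ordinal.{0}} (ha : a < omega1) {B : ∀ i : IsolPts Yb, Set (Xb i)}
    (hB : ∀ i, B i ∈ FBorel (Xb i) a) : Amal Yb Xb B ∈ FBorel (ZoomCarrier Yb Xb) a := by
  induction a using Ordinal.induction generalizing B with
  | h a ih =>
    rcases Ordinal.zero_or_succ_or_isSuccLimit a with rfl | ⟨d, rfl⟩ | hlim
    · rw [fborel_def, if_pos rfl]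
      refine amal_closed Yb Xb fun i => ?_
      have := hB i
      rwa [fborel_def, if_pos rfl] at this
    · -- successor case
      have h0 : (Order.succ d : Ordinal.{0}) ≠ 0 := (Order.succ_ne_bot d)
      have hd : d < Order.succ d := Order.lt_succ d
      have hd1 : d < omega1 := lt_trans hd ha
      rw [fborel_def, if_neg h0]
      by_cases he : EvenOrd (Order.succ d)
      · rw [if_pos he]
        have hB' : ∀ i, ∃ f : ℕ → Set (Xb i),
            (∀ n, f n ∈ FBorel (Xb i) d) ∧ B i = ⋂ n, f n := by
          intro i
          have := hB i
          rw [fborel_def, if_neg h0, if_pos he] at this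
          obtain ⟨f, hf, hfeq⟩ := this
          refine ⟨f, fun n => ?_, hfeq⟩
          obtain ⟨b, hb, hfb⟩ := hf n
          exact fborel_mono (Order.lt_succ_iff.1 hb) hfb
        choose f hf hfeq using hB'
        refine ⟨fun n => Amal Yb Xb (fun i => f i n), fun n =>
          ⟨d, hd, ih d hd hd1 fun i => hf i n⟩, ?_⟩
        have : B = fun i => ⋂ n, f i n := funext hfeq
        rw [this, amal_iInter]
      · rw [if_neg he]
        have hB' : ∀ i, ∃ f : ℕ → Set (Xb i),
            (∀ n, f n ∈ FBorel (Xb i) d) ∧ B i = ⋃ n, f n := by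
          intro i
          have := hB i
          rw [fborel_def, if_neg h0, if_neg he] at this
          obtain ⟨f, hf, hfeq⟩ := this
          refine ⟨f, fun n => ?_, hfeq⟩
          obtain ⟨b, hb, hfb⟩ := hf n
          exact fborel_mono (Order.lt_succ_iff.1 hb) hfb
        choose f hf hfeq using hB'
        refine ⟨fun n => Amal Yb Xb (fun i => f i n), fun n =>
          ⟨d, hd, ih d hd hd1 fun i => hf i n⟩, ?_⟩
        have : B = fun i => ⋃ n, f i n := funext hfeq
        rw [this, amal_iUnion]
    · -- limit case
      have h0 : a ≠ 0 := by rw [← Ordinal.bot_eq_zero]; exact hlim.ne_bot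
      have he : EvenOrd a := evenOrd_of_isLimit hlim
      obtain ⟨g, hg_lt, hg_surj⟩ := exists_enum_Iio h0 ha
      have hB' : ∀ i, ∃ f : ℕ → Set (Xb i), ∃ β : ℕ → Ordinal.{0},
          (∀ n, β n < a) ∧ (∀ n, f n ∈ FBorel (Xb i) (β n)) ∧ B i = ⋂ n, f n := by
        intro i
        have := hB i
        rw [fborel_def, if_neg h0, if_pos he] at this
        obtain ⟨f, hf, hfeq⟩ := this
        choose β hβ hfβ using hf
        exact ⟨f, β, hβ, hfβ, hfeq⟩
      choose f β hβ hfβ hfeq using hB'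
      -- merged scheme
      set h : ∀ i : IsolPts Yb, ℕ → Set (Xb i) := fun i k =>
        if β i (Nat.unpair k).1 ≤ g (Nat.unpair k).2 then f i (Nat.unpair k).1
        else Set.univ with hh
      have hmem : ∀ k i, h i k ∈ FBorel (Xb i) (g (Nat.unpair k).2) := by
        intro k i
        rw [hh]
        dsimp only
        split
        · next hcond => exact fborel_mono hcond (hfβ i _)
        · exact fborel_mono zero_le (isClosed_mem_fborel isClosed_univ 0)
      have hBeq : ∀ i, B i = ⋂ k, h i k := by
        intro i
        apply Set.eq_of_subset_of_subset
        · intro x hx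
          refine Set.mem_iInter.2 fun k => ?_
          rw [hh]
          dsimp only
          split
          · rw [hfeq i] at hx
            exact Set.mem_iInter.1 hx _
          · trivial
        · intro x hx
          rw [hfeq i]
          refine Set.mem_iInter.2 fun n => ?_
          obtain ⟨m, hm⟩ := hg_surj (β i n) (hβ i n)
          have := Set.mem_iInter.1 hx (Nat.pair n m)
          rw [hh] at this
          simp only [Nat.unpair_pair] at this
          rw [if_pos (le_of_eq hm.symm)] at this
          exact this
      rw [fborel_def, if_neg h0, if_pos he]
      refine ⟨fun k => Amal Yb Xb (fun i => h i k), fun k =>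
        ⟨g (Nat.unpair k).2, hg_lt _,
          ih _ (hg_lt _) (lt_trans (hg_lt _) ha) fun i => hmem k i⟩, ?_⟩
      have : B = fun i => ⋂ k, h i k := funext hBeq
      rw [this, amal_iInter]

theorem amal_fclass {a : Ordinal.{0}} (ha : a ≤ omega1) {B : ∀ i : IsolPts Yb, Set (Xb i)}
    (hB : ∀ i, B i ∈ FClass (Xb i) a) : Amal Yb Xb B ∈ FClass (ZoomCarrier Yb Xb) a := by
  rw [FClass]
  rcases lt_or_eq_of_le ha with hlt | rfl
  · rw [if_pos hlt]
    refine amal_fborel Yb Xb hlt fun i => ?_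
    have := hB i
    rwa [FClass, if_pos hlt] at this
  · rw [if_neg (lt_irrefl _)]
    refine amal_suslinF Yb Xb fun i => ?_
    have := hB i
    rwa [FClass, if_neg (lt_irrefl _)] at this

end Zoom2
theorem fclass_subset_suslinF' {Y : Type u} [TopologicalSpace Y] {a : Ordinal.{0}} :
    FClass Y a ⊆ SuslinF Y := by
  rw [FClass]
  split
  · exact fborel_subset_suslinF
  · exact subset_rfl


end AuxLemmas

/-- The complexity of a zoom space `Z(Y, X)` inside `Z(Ỹ, X̃)` (for `Y`
dense in `Ỹ` and `X i ⊆ X̃ i`) is the maximum of the complexity of `Y` in `Ỹ` and the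
supremum of the complexities of the `X i` in the `X̃ i`, whenever one of the sides is
defined. -/
theorem zoom_space_complexity (Yb : Type u) [TopologicalSpace Yb] [T35Space Yb]
    (Xb : IsolPts Yb → Type u) [∀ i, TopologicalSpace (Xb i)] [∀ i, T35Space (Xb i)]
    (Ys : Set Yb) (hYd : Dense Ys)
    (A : ∀ i : IsolPts Yb, Set (Xb i)) (hA : ∀ i, (A i).Nonempty)
    (hdef : zoomSub Yb Xb Ys A ∈ SuslinF (ZoomCarrier Yb Xb) ∨
      (Ys ∈ SuslinF Yb ∧ ∀ i, A i ∈ SuslinF (Xb i))) :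
    ComplIn (ZoomCarrier Yb Xb) (zoomSub Yb Xb Ys A) =
      max (ComplIn Yb Ys) (⨆ i : IsolPts Yb, ComplIn (Xb i) (A i)) := by
  classical
  have hIsol : ∀ i : IsolPts Yb, (i : Yb) ∈ Ys := by
    intro i
    obtain ⟨x, hx1, hx2⟩ := hYd.inter_open_nonempty {(i : Yb)} i.2 ⟨(i : Yb), rfl⟩
    rw [Set.mem_singleton_iff] at hx1
    exact hx1 ▸ hx2
  set pt : ∀ i : IsolPts Yb, Xb i := fun i => (hA i).some with hptdef
  have hpt : ∀ i, pt i ∈ A i := fun i => (hA i).some_mem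
  have hq := continuous_zoomQ Yb Xb
  have hs := continuous_zoomS Yb Xb pt
  have hsZ : zoomS Yb Xb pt ⁻¹' zoomSub Yb Xb Ys A = Ys :=
    zoomS_preimage_zoomSub Yb Xb pt Ys A hIsol hpt
  have heZ : ∀ i : IsolPts Yb, zoomE Yb Xb i ⁻¹' zoomSub Yb Xb Ys A = A i :=
    fun i => zoomE_preimage_zoomSub Yb Xb i Ys A
  have hZeq : zoomSub Yb Xb Ys A = zoomQ Yb Xb ⁻¹' Ys ∩ Amal Yb Xb A := by
    ext z
    cases z with
    | inl y =>
      show (y : Yb) ∈ Ys ↔ (y : Yb) ∈ Ys ∧ True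
      simp
    | inr p =>
      show p.2 ∈ A p.1 ↔ (p.1 : Yb) ∈ Ys ∧ p.2 ∈ A p.1
      exact (and_iff_right (hIsol p.1)).symm
  -- Suslin-F memberships of both sides
  have hYA : Ys ∈ SuslinF Yb ∧ ∀ i, A i ∈ SuslinF (Xb i) := by
    rcases hdef with hZs | h
    · refine ⟨by rw [← hsZ]; exact suslinF_preimage hs hZs, fun i => ?_⟩
      rw [← heZ i]
      exact suslinF_preimage (continuous_zoomE Yb Xb i) hZs
    · exact h
  obtain ⟨hYsS, hAS⟩ := hYA
  obtain ⟨haY1, haY2⟩ := complIn_spec hYsS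
  have hsup_le : (⨆ i : IsolPts Yb, ComplIn (Xb i) (A i)) ≤ omega1 :=
    ciSup_le' fun i => (complIn_spec (hAS i)).1
  have hM1 : max (ComplIn Yb Ys) (⨆ i : IsolPts Yb, ComplIn (Xb i) (A i)) ≤ omega1 :=
    max_le haY1 hsup_le
  have hBdd : BddAbove (Set.range fun i : IsolPts Yb => ComplIn (Xb i) (A i)) := by
    refine ⟨omega1, ?_⟩
    rintro x ⟨i, rfl⟩
    exact (complIn_spec (hAS i)).1
  have hZM : zoomSub Yb Xb Ys A ∈ FClass (ZoomCarrier Yb Xb)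
      (max (ComplIn Yb Ys) (⨆ i : IsolPts Yb, ComplIn (Xb i) (A i))) := by
    rw [hZeq]
    refine fclass_inter (fclass_preimage hq
      (fclass_mono (le_max_left _ _) hM1 haY2)) ?_
    refine amal_fclass Yb Xb hM1 fun i => ?_
    exact fclass_mono (le_trans (le_ciSup hBdd i) (le_max_right _ _)) hM1
      (complIn_spec (hAS i)).2
  have hcle : ComplIn (ZoomCarrier Yb Xb) (zoomSub Yb Xb Ys A) ≤
      max (ComplIn Yb Ys) (⨆ i : IsolPts Yb, ComplIn (Xb i) (A i)) :=
    complIn_le_of_mem hM1 hZM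
  have hZsus : zoomSub Yb Xb Ys A ∈ SuslinF (ZoomCarrier Yb Xb) :=
    fclass_subset_suslinF' hZM
  obtain ⟨hc1, hc2⟩ := complIn_spec hZsus
  have hYc : ComplIn Yb Ys ≤ ComplIn (ZoomCarrier Yb Xb) (zoomSub Yb Xb Ys A) := by
    have hpre := fclass_preimage hs hc2
    rw [hsZ] at hpre
    exact complIn_le_of_mem hc1 hpre
  have hAc : ∀ i : IsolPts Yb, ComplIn (Xb i) (A i) ≤
      ComplIn (ZoomCarrier Yb Xb) (zoomSub Yb Xb Ys A) := by
    intro i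
    have hpre := fclass_preimage (continuous_zoomE Yb Xb i) hc2
    rw [heZ i] at hpre
    exact complIn_le_of_mem hc1 hpre
  exact le_antisymm hcle (max_le hYc (ciSup_le' hAc))


end FBorelPaper
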